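/- For ℓ ∈ ℕ with ℓ ≥ 1 and φ(j) = min{j, ℓ}, the Poisson concavity ratio satisfies α_φ = min_{x ∈ ℕ, x ≥ 1} E[min(Poi(x),ℓ)]/min(x,ℓ) = 1 - ℓ^ℓ e^{-ℓ}/ℓ!, and the minimum is attained at x = ℓ. -/

import Mathlib

open Finset

lemma exp_tsum (x : ℝ) : (∑' k : ℕ, x ^ k / (Nat.factorial k)) = Real.exp x := by
  rw [Real.exp_eq_exp_ℝ, NormedSpace.exp_eq_tsum_div]

lemma usum (x : ℝ) (n : ℕ) :
    ∑ k ∈ range n, (x - k) * x ^ k / (Nat.factorial k)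
      = n * x ^ n / (Nat.factorial n) := by
  have : ∀ k : ℕ, (x - k) * x ^ k / (Nat.factorial k)
      = ((k+1 : ℕ) * x ^ (k+1) / (Nat.factorial (k+1)) - k * x ^ k / (Nat.factorial k)) := by
    intro k
    rw [Nat.factorial_succ]
    push_cast
    have h1 : ((k:ℝ)+1) ≠ 0 := by positivity
    have h2 : (Nat.factorial k : ℝ) ≠ 0 := Nat.cast_ne_zero.2 (Nat.factorial_ne_zero k)
    field_simp
    ring
  rw [Finset.sum_congr rfl (fun k _ => this k), Finset.sum_range_sub
    (fun k => (k:ℝ) * x ^ k / (Nat.factorial k))]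
  simp


noncomputable def Tl (ℓ : ℕ) (x : ℝ) : ℝ :=
  ∑ k ∈ range ℓ, ((ℓ:ℝ) - k) * x ^ k / (Nat.factorial k)
noncomputable def Pl (ℓ : ℕ) (x : ℝ) : ℝ :=
  ∑ k ∈ range ℓ, x ^ k / (Nat.factorial k)

lemma hasDerivAt_Tl (ℓ : ℕ) (hℓ : 1 ≤ ℓ) (x : ℝ) :
    HasDerivAt (Tl ℓ) (Tl ℓ x - Pl ℓ x) x := by
  have h : HasDerivAt (Tl ℓ)
      (∑ k ∈ range ℓ, ((ℓ:ℝ) - k) * ((k:ℝ) * x ^ (k-1)) / (Nat.factorial k)) x := by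
    unfold Tl
    apply HasDerivAt.fun_sum
    intro k _
    simpa using ((hasDerivAt_pow k x).const_mul ((ℓ:ℝ) - k)).div_const _
  convert h using 1
  obtain ⟨m, rfl⟩ : ∃ m, ℓ = m + 1 := ⟨ℓ - 1, by omega⟩
  unfold Tl Pl
  rw [← Finset.sum_sub_distrib, Finset.sum_range_succ, Finset.sum_range_succ']
  have hlast : ((m:ℝ) + 1 - m) * x ^ m / (Nat.factorial m) - x ^ m / (Nat.factorial m) = 0 := by
    ring
  push_cast
  rw [hlast, add_zero]
  simp only [Nat.cast_zero, pow_zero, mul_zero, zero_mul, zero_div, add_zero,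
    Nat.zero_sub, Nat.cast_zero]
  apply Finset.sum_congr rfl
  intro k _
  have h2 : (Nat.factorial (k+1) : ℝ) = (k+1) * Nat.factorial k := by
    rw [Nat.factorial_succ]; push_cast; ring
  have h3 : (k:ℝ) + 1 ≠ 0 := by positivity
  have h4 : (Nat.factorial k : ℝ) ≠ 0 := Nat.cast_ne_zero.2 (Nat.factorial_ne_zero k)
  push_cast
  rw [h2]
  field_simp
  ring

lemma tsum_min_eq (ℓ : ℕ) (x : ℝ) :
    (∑' k : ℕ, Real.exp (-x) * x ^ k / (Nat.factorial k) * min (k : ℝ) (ℓ : ℝ))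
      = ℓ - Real.exp (-x) * Tl ℓ x := by
  have hA : Summable (fun k : ℕ => Real.exp (-x) * x ^ k / (Nat.factorial k) * ℓ) := by
    have := ((Real.summable_pow_div_factorial x).mul_left (Real.exp (-x))).mul_right (ℓ:ℝ)
    refine this.congr (fun k => ?_)
    ring
  have hBz : ∀ k ∉ range ℓ,
      Real.exp (-x) * x ^ k / (Nat.factorial k) * ((ℓ:ℝ) - min (k:ℝ) (ℓ:ℝ)) = 0 := by
    intro k hk
    have hk' : ℓ ≤ k := le_of_not_gt (fun h => hk (Finset.mem_range.mpr h))
    have : min (k:ℝ) (ℓ:ℝ) = ℓ := min_eq_right (by exact_mod_cast hk')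
    rw [this]
    ring
  have hB : Summable (fun k : ℕ =>
      Real.exp (-x) * x ^ k / (Nat.factorial k) * ((ℓ:ℝ) - min (k:ℝ) (ℓ:ℝ))) :=
    summable_of_ne_finset_zero hBz
  have hsplit : (fun k : ℕ => Real.exp (-x) * x ^ k / (Nat.factorial k) * min (k:ℝ) (ℓ:ℝ))
      = fun k : ℕ => Real.exp (-x) * x ^ k / (Nat.factorial k) * ℓ
        - Real.exp (-x) * x ^ k / (Nat.factorial k) * ((ℓ:ℝ) - min (k:ℝ) (ℓ:ℝ)) := by
    funext k; ring
  rw [hsplit, hA.tsum_sub hB]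
  have h1 : (∑' k : ℕ, Real.exp (-x) * x ^ k / (Nat.factorial k) * ℓ) = ℓ := by
    have he : (fun k : ℕ => Real.exp (-x) * x ^ k / (Nat.factorial k) * ℓ)
        = fun k : ℕ => (Real.exp (-x) * ℓ) * (x ^ k / (Nat.factorial k)) := by
      funext k; ring
    rw [he, tsum_mul_left, exp_tsum, Real.exp_neg]
    field_simp
  have h2 : (∑' k : ℕ, Real.exp (-x) * x ^ k / (Nat.factorial k) * ((ℓ:ℝ) - min (k:ℝ) (ℓ:ℝ)))
      = Real.exp (-x) * Tl ℓ x := by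
    rw [tsum_eq_sum hBz]
    unfold Tl
    rw [Finset.mul_sum]
    apply Finset.sum_congr rfl
    intro k hk
    have hk' : (k:ℝ) ≤ ℓ := by exact_mod_cast (Finset.mem_range.mp hk).le
    rw [min_eq_left hk']
    ring
  rw [h1, h2]

lemma identity_lem (ℓ : ℕ) (x : ℝ) :
    x * Pl ℓ x + Tl ℓ x = ℓ * Pl (ℓ+1) x := by
  have key := usum x ℓ
  have h1 : x * Pl ℓ x + Tl ℓ x
      = ∑ k ∈ range ℓ, ((x - k) * x ^ k / (Nat.factorial k) + ℓ * (x ^ k / (Nat.factorial k))) := by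
    unfold Pl Tl
    rw [Finset.mul_sum, ← Finset.sum_add_distrib]
    exact Finset.sum_congr rfl (fun k _ => by ring)
  rw [h1, Finset.sum_add_distrib, key, ← Finset.mul_sum]
  unfold Pl
  rw [Finset.sum_range_succ]
  ring

lemma Pl_nonneg (ℓ : ℕ) {x : ℝ} (hx : 0 ≤ x) : 0 ≤ Pl ℓ x :=
  Finset.sum_nonneg fun k _ => by positivity

lemma Pl_le_exp (ℓ : ℕ) {x : ℝ} (hx : 0 ≤ x) : Pl ℓ x ≤ Real.exp x :=
  Real.sum_le_exp_of_nonneg hx ℓ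

lemma hasDerivAt_N (ℓ : ℕ) (hℓ : 1 ≤ ℓ) (x : ℝ) :
    HasDerivAt (fun x => (ℓ:ℝ) - Real.exp (-x) * Tl ℓ x) (Real.exp (-x) * Pl ℓ x) x := by
  have hexp : HasDerivAt (fun x : ℝ => Real.exp (-x)) (Real.exp (-x) * (-1)) x :=
    (hasDerivAt_neg x).exp
  have hmul := hexp.mul (hasDerivAt_Tl ℓ hℓ x)
  have := hmul.const_sub (ℓ:ℝ)
  refine this.congr_deriv ?_
  ring

lemma antitone_eT (ℓ : ℕ) (hℓ : 1 ≤ ℓ) :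
    AntitoneOn (fun x => Real.exp (-x) * Tl ℓ x) (Set.Ici (0:ℝ)) := by
  have hd : ∀ x : ℝ, HasDerivAt (fun x => Real.exp (-x) * Tl ℓ x)
      (Real.exp (-x) * (-1) * Tl ℓ x + Real.exp (-x) * (Tl ℓ x - Pl ℓ x)) x :=
    fun x => ((hasDerivAt_neg x).exp).mul (hasDerivAt_Tl ℓ hℓ x)
  apply antitoneOn_of_deriv_nonpos (convex_Ici 0)
  · exact fun x _ => ((hd x).differentiableAt).continuousAt.continuousWithinAt
  · exact fun x _ => ((hd x).differentiableAt).differentiableWithinAt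
  · intro x hx
    rw [interior_Ici] at hx
    rw [(hd x).deriv]
    have h1 : 0 ≤ Pl ℓ x := Pl_nonneg ℓ (le_of_lt hx)
    have h2 : 0 ≤ Tl ℓ x := Finset.sum_nonneg fun k hk => by
      have : (k:ℝ) ≤ ℓ := by exact_mod_cast (Finset.mem_range.mp hk).le
      have hx' : (0:ℝ) ≤ x := le_of_lt hx
      apply div_nonneg (mul_nonneg (by linarith) (pow_nonneg hx' k)) (by positivity)
    nlinarith [Real.exp_pos (-x)]

lemma antitone_g (ℓ : ℕ) (hℓ : 1 ≤ ℓ) :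
    AntitoneOn (fun x => ((ℓ:ℝ) - Real.exp (-x) * Tl ℓ x) / x) (Set.Ici (1:ℝ)) := by
  have hd : ∀ x : ℝ, x ≠ 0 → HasDerivAt (fun x => ((ℓ:ℝ) - Real.exp (-x) * Tl ℓ x) / x)
      ((Real.exp (-x) * Pl ℓ x * x - ((ℓ:ℝ) - Real.exp (-x) * Tl ℓ x) * 1) / x ^ 2) x :=
    fun x hx => (hasDerivAt_N ℓ hℓ x).div (hasDerivAt_id x) hx
  apply antitoneOn_of_deriv_nonpos (convex_Ici 1)
  · intro x hx
    have hx0 : x ≠ 0 := by have := hx; simp only [Set.mem_Ici] at this; linarith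
    exact ((hd x hx0).differentiableAt).continuousAt.continuousWithinAt
  · intro x hx
    rw [interior_Ici] at hx
    have hx0 : x ≠ 0 := by linarith [Set.mem_Ioi.mp hx]
    exact ((hd x hx0).differentiableAt).differentiableWithinAt
  · intro x hx
    rw [interior_Ici] at hx
    have hx1 : (1:ℝ) < x := hx
    have hx0 : x ≠ 0 := by linarith
    rw [(hd x hx0).deriv]
    apply div_nonpos_of_nonpos_of_nonneg _ (by positivity)
    have hid := identity_lem ℓ x
    have hle : Pl (ℓ+1) x ≤ Real.exp x := Pl_le_exp (ℓ+1) (by linarith)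
    have hexp : Real.exp (-x) * Real.exp x = 1 := by
      rw [← Real.exp_add]; simp
    have h3 : Real.exp (-x) * (x * Pl ℓ x + Tl ℓ x) ≤ (ℓ:ℝ) := by
      rw [hid]
      calc Real.exp (-x) * ((ℓ:ℝ) * Pl (ℓ+1) x)
          ≤ Real.exp (-x) * ((ℓ:ℝ) * Real.exp x) := by
            apply mul_le_mul_of_nonneg_left _ (le_of_lt (Real.exp_pos _))
            exact mul_le_mul_of_nonneg_left hle (by positivity)
        _ = (ℓ:ℝ) := by rw [mul_comm ((ℓ:ℝ)) (Real.exp x), ← mul_assoc, hexp, one_mul]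
    nlinarith

/-- For `φ(j) = min(j, ℓ)`, the Poisson concavity ratio equals `1 - ℓ^ℓ e^{-ℓ} / ℓ!`
and the minimum over positive integers is attained at `x = ℓ`. -/
theorem stmt9 (ℓ : ℕ) (hℓ : 1 ≤ ℓ)
    (f : ℝ → ℝ)
    (hf : ∀ x : ℝ, f x =
      (∑' k : ℕ, Real.exp (-x) * x ^ k / (Nat.factorial k) * min (k : ℝ) (ℓ : ℝ)) /
        min x (ℓ : ℝ)) :
    IsLeast {y : ℝ | ∃ x : ℕ, 1 ≤ x ∧ y = f x}
        (1 - (ℓ : ℝ) ^ ℓ * Real.exp (-(ℓ : ℝ)) / (Nat.factorial ℓ)) ∧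
      f (ℓ : ℝ) = 1 - (ℓ : ℝ) ^ ℓ * Real.exp (-(ℓ : ℝ)) / (Nat.factorial ℓ) := by
  have hl0 : (0:ℝ) < (ℓ:ℝ) := by exact_mod_cast hℓ
  have hfac : (Nat.factorial ℓ : ℝ) ≠ 0 := Nat.cast_ne_zero.2 (Nat.factorial_ne_zero ℓ)
  have hT : Tl ℓ (ℓ:ℝ) = (ℓ:ℝ) * (ℓ:ℝ) ^ ℓ / (Nat.factorial ℓ) := usum (ℓ:ℝ) ℓ
  have hNl : ((ℓ:ℝ) - Real.exp (-(ℓ:ℝ)) * Tl ℓ (ℓ:ℝ)) / (ℓ:ℝ)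
      = 1 - (ℓ : ℝ) ^ ℓ * Real.exp (-(ℓ : ℝ)) / (Nat.factorial ℓ) := by
    rw [hT]
    field_simp
  have hfℓ : f (ℓ:ℝ) = 1 - (ℓ : ℝ) ^ ℓ * Real.exp (-(ℓ : ℝ)) / (Nat.factorial ℓ) := by
    rw [hf, tsum_min_eq, min_self, hNl]
  refine ⟨⟨⟨ℓ, hℓ, hfℓ.symm⟩, ?_⟩, hfℓ⟩
  rintro y ⟨n, hn1, rfl⟩
  have hn1' : (1:ℝ) ≤ (n:ℝ) := by exact_mod_cast hn1
  rw [hf, tsum_min_eq]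
  rcases le_total n ℓ with hcase | hcase
  · have hnl : (n:ℝ) ≤ (ℓ:ℝ) := by exact_mod_cast hcase
    rw [min_eq_left hnl]
    have := antitone_g ℓ hℓ (Set.mem_Ici.mpr hn1')
      (Set.mem_Ici.mpr (by exact_mod_cast hℓ : (1:ℝ) ≤ (ℓ:ℝ))) hnl
    simpa [hNl] using this
  · have hnl : (ℓ:ℝ) ≤ (n:ℝ) := by exact_mod_cast hcase
    rw [min_eq_right hnl]
    have hmono := antitone_eT ℓ hℓ (Set.mem_Ici.mpr (le_of_lt hl0))
      (Set.mem_Ici.mpr (by linarith)) hnl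
    rw [← hNl]
    exact (div_le_div_iff_of_pos_right hl0).mpr (by simp only [] at hmono; linarith [hmono])
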